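/- Under the same assumptions, the energy-norm error of the ideal multiscale method satisfies ⦀ u − u_H^ms ⦀ ≤ C·H·‖f − P_H f‖_{L²(Ω)}, where C depends only on the ellipticity bounds α, β of A and the Poincaré–Wirtinger constant of Ω, but not on the mesh size H or the oscillations of A. -/

import Mathlib

open scoped RealInnerProductSpace

/-- Cauchy–Schwarz for a symmetric positive-semidefinite continuous operator. -/
lemma psd_cauchy_schwarz {E : Type*} [NormedAddCommGroup E] [InnerProductSpace ℝ E]
    (T : E →L[ℝ] E) (hsym : ∀ w z : E, ⟪T w, z⟫ = ⟪w, T z⟫)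
    (hpos : ∀ w : E, 0 ≤ ⟪T w, w⟫) (x y : E) :
    ⟪T x, y⟫ ^ 2 ≤ ⟪T x, x⟫ * ⟪T y, y⟫ := by
  have key : ∀ t : ℝ, 0 ≤ ⟪T x, x⟫ * (t * t) + (2 * ⟪T x, y⟫) * t + ⟪T y, y⟫ := by
    intro t
    have h0 := hpos (t • x + y)
    have hyx : ⟪T y, x⟫ = ⟪T x, y⟫ := by
      rw [hsym y x, real_inner_comm]
    calc (0:ℝ) ≤ ⟪T (t • x + y), t • x + y⟫ := h0
      _ = ⟪T x, x⟫ * (t * t) + (2 * ⟪T x, y⟫) * t + ⟪T y, y⟫ := by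
          simp [map_add, map_smul, inner_add_left, inner_add_right, inner_smul_left,
            inner_smul_right, hyx]
          ring
  have hd := discrim_le_zero key
  rw [discrim] at hd
  nlinarith [hd]

set_option maxHeartbeats 2000000 in
/-- **Energy-norm error estimate for the ideal multiscale method:**
`⦀u − u_H^ms⦀ ≤ C·H·‖f − P_H f‖` with explicit constant `C = √β·C_P` depending only
on the ellipticity bound `β` of `A` and the projection-approximation constant `C_P`
(which depends on the mesh regularity and the Poincaré–Wirtinger constant), but not
on the mesh size `H` or the oscillations of `A`.  Abstract model: `Hdiv = H₀(div,Ω)`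
with `L²`-realization `ι` into `L2v` and divergence `D` into `S`; `H1 = H¹(Ω)` with
gradient `G` and embedding `j`; `Ainv` models `A⁻¹` with spectral bounds `α, β`;
the energy norm is `⦀v⦀ = √((A⁻¹ιv, ιv))`; `P_H` is the orthogonal projection onto
`Q_H` with the approximation property `‖q − P_H q‖ ≤ C_P·H·‖∇q‖`, `hGradChar` the
weak-gradient characterization, `π, 𝒞` the quasi-interpolation and ideal corrector
building `V^ms = (id−𝒞)(im π)`. -/
theorem ideal_energy_error_estimate
    {Hdiv L2v S H1 : Type*}
    [NormedAddCommGroup Hdiv] [InnerProductSpace ℝ Hdiv] [CompleteSpace Hdiv]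
    [NormedAddCommGroup L2v] [InnerProductSpace ℝ L2v] [CompleteSpace L2v]
    [NormedAddCommGroup S] [InnerProductSpace ℝ S] [CompleteSpace S]
    [NormedAddCommGroup H1] [InnerProductSpace ℝ H1] [CompleteSpace H1]
    (ι : Hdiv →L[ℝ] L2v) (D : Hdiv →L[ℝ] S)
    (G : H1 →L[ℝ] L2v) (j : H1 →L[ℝ] S)
    (Ainv : L2v →L[ℝ] L2v) (hAsym : ∀ w z : L2v, ⟪Ainv w, z⟫ = ⟪w, Ainv z⟫)
    (α β : ℝ) (hα : 0 < α) (hβ : 0 < β)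
    (hlow : ∀ w : L2v, α * ‖w‖ ^ 2 ≤ ⟪Ainv w, w⟫)
    (hupp : ∀ w : L2v, ⟪Ainv w, w⟫ ≤ β * ‖w‖ ^ 2)
    (QH L0 : Submodule ℝ S) [QH.HasOrthogonalProjection]
    (hPL0 : ∀ q ∈ L0, (QH.orthogonalProjectionOnto q : S) ∈ L0)
    (Hm C_P : ℝ) (hHm : 0 < Hm) (hCP : 0 ≤ C_P)
    -- approximation property of the L²-projection: ‖q − P_H q‖ ≤ C_P·H·‖∇q‖
    (happrox : ∀ r : H1, ‖j r - (QH.orthogonalProjectionOnto (j r) : S)‖ ≤ C_P * Hm * ‖G r‖)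
    -- characterization of the weak gradient
    (hGradChar : ∀ (pp : S) (g : L2v),
      (∀ v : Hdiv, ⟪D v, pp⟫ = -⟪g, ι v⟫) → ∃ pt : H1, j pt = pp ∧ G pt = g)
    (π 𝒞 : Hdiv →L[ℝ] Hdiv) (hπproj : ∀ v : Hdiv, π (π v) = π v)
    (hcomm : ∀ v : Hdiv, D (π v) = (QH.orthogonalProjectionOnto (D v) : S))
    (h𝒞mem : ∀ v : Hdiv, 𝒞 v ∈ LinearMap.ker (π : Hdiv →ₗ[ℝ] Hdiv) ⊓ LinearMap.ker (D : Hdiv →ₗ[ℝ] S))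
    (h𝒞eq : ∀ v : Hdiv, ∀ w ∈ LinearMap.ker (π : Hdiv →ₗ[ℝ] Hdiv) ⊓ LinearMap.ker (D : Hdiv →ₗ[ℝ] S),
      ⟪Ainv (ι (𝒞 v)), ι w⟫ = ⟪Ainv (ι v), ι w⟫)
    (hDL0 : ∀ v : Hdiv, D v ∈ L0)
    (f : S) (hf : f ∈ L0)
    -- exact solution (u, p) with source f
    (u : Hdiv) (p : S) (hp : p ∈ L0)
    (h1 : ∀ v : Hdiv, ⟪Ainv (ι u), ι v⟫ + ⟪D v, p⟫ = 0)
    (h2 : ∀ q ∈ L0, ⟪D u, q⟫ = -⟪f, q⟫)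
    -- exact solution (uPf, pPf) with source P_H f
    (uPf : Hdiv) (pPf : S) (hpPf : pPf ∈ L0)
    (h1Pf : ∀ v : Hdiv, ⟪Ainv (ι uPf), ι v⟫ + ⟪D v, pPf⟫ = 0)
    (h2Pf : ∀ q ∈ L0, ⟪D uPf, q⟫ = -⟪(QH.orthogonalProjectionOnto f : S), q⟫)
    -- ideal multiscale solution (uHms, pH)
    (uHms : Hdiv) (pH : S)
    (huHms : uHms ∈ Submodule.map ((ContinuousLinearMap.id ℝ Hdiv - 𝒞) : Hdiv →ₗ[ℝ] Hdiv)
      (LinearMap.range (π : Hdiv →ₗ[ℝ] Hdiv)))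
    (hpH : pH ∈ QH ⊓ L0)
    (hdivV : ∀ v ∈ Submodule.map ((ContinuousLinearMap.id ℝ Hdiv - 𝒞) : Hdiv →ₗ[ℝ] Hdiv)
      (LinearMap.range (π : Hdiv →ₗ[ℝ] Hdiv)), D v ∈ QH)
    (hd1 : ∀ v ∈ Submodule.map ((ContinuousLinearMap.id ℝ Hdiv - 𝒞) : Hdiv →ₗ[ℝ] Hdiv)
      (LinearMap.range (π : Hdiv →ₗ[ℝ] Hdiv)), ⟪Ainv (ι uHms), ι v⟫ + ⟪D v, pH⟫ = 0)
    (hd2 : ∀ qH ∈ QH, ⟪D uHms, qH⟫ = -⟪f, qH⟫) :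
    Real.sqrt ⟪Ainv (ι (u - uHms)), ι (u - uHms)⟫ ≤
      Real.sqrt β * C_P * Hm * ‖f - (QH.orthogonalProjectionOnto f : S)‖ := by
  classical
  -- notation: opaque abbreviations
  obtain ⟨Pf, hPf⟩ : ∃ x : S, x = (QH.orthogonalProjectionOnto f : S) := ⟨_, rfl⟩
  have hPfQH : Pf ∈ QH := hPf ▸ SetLike.coe_mem _
  have hPfL0 : Pf ∈ L0 := hPf ▸ hPL0 f hf
  have hfPf : ∀ x ∈ QH, ⟪f - Pf, x⟫ = 0 := by
    intro x hx
    rw [real_inner_comm, hPf]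
    exact (Submodule.mem_orthogonal QH _).mp
      (QH.sub_starProjection_mem_orthogonal f) x hx
  have hpos : ∀ w : L2v, 0 ≤ ⟪Ainv w, w⟫ := fun w =>
    le_trans (by positivity) (hlow w)
  -- divergence identities
  have hDu : D u = -f := by
    have hmem : D u + f ∈ L0 := L0.add_mem (hDL0 u) hf
    have h0 : ⟪D u + f, D u + f⟫ = 0 := by
      rw [inner_add_left, h2 _ hmem]; ring
    exact eq_neg_of_add_eq_zero_left (inner_self_eq_zero.mp h0)
  have hDuPf : D uPf = -Pf := by
    have hmem : D uPf + Pf ∈ L0 := L0.add_mem (hDL0 uPf) hPfL0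
    have h0 : ⟪D uPf + Pf, D uPf + Pf⟫ = 0 := by
      rw [inner_add_left, h2Pf _ hmem, ← hPf]; ring
    exact eq_neg_of_add_eq_zero_left (inner_self_eq_zero.mp h0)
  have hDuHms : D uHms = -Pf := by
    have hmem : D uHms + Pf ∈ QH := QH.add_mem (hdivV uHms huHms) hPfQH
    have h0 : ⟪D uHms + Pf, D uHms + Pf⟫ = 0 := by
      have ha := hd2 _ hmem
      have hb := hfPf _ hmem
      rw [inner_sub_left] at hb
      rw [inner_add_left, ha]
      linarith
    exact eq_neg_of_add_eq_zero_left (inner_self_eq_zero.mp h0)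
  -- abbreviations
  obtain ⟨e, he⟩ : ∃ x : Hdiv, x = u - uHms := ⟨_, rfl⟩
  obtain ⟨z, hz⟩ : ∃ x : Hdiv, x = uPf - uHms := ⟨_, rfl⟩
  obtain ⟨ep, hep⟩ : ∃ x : Hdiv, x = u - uPf := ⟨_, rfl⟩
  have hepe : ep = e - z := by rw [hep, he, hz]; abel
  have hDz : D z = 0 := by rw [hz, map_sub, hDuPf, hDuHms, sub_self]
  obtain ⟨v0, hv0⟩ : ∃ x : Hdiv, x = π z - 𝒞 (π z) := ⟨_, rfl⟩
  obtain ⟨w, hw⟩ : ∃ x : Hdiv, x = z - v0 := ⟨_, rfl⟩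
  have hCmem₁ : ∀ v : Hdiv, π (𝒞 v) = 0 := fun v => by
    have := (Submodule.mem_inf.mp (h𝒞mem v)).1
    simpa using this
  have hCmem₂ : ∀ v : Hdiv, D (𝒞 v) = 0 := fun v => by
    have := (Submodule.mem_inf.mp (h𝒞mem v)).2
    simpa using this
  have hDv0 : D v0 = 0 := by
    rw [hv0, map_sub, hCmem₂, hcomm, hDz, map_zero, ZeroMemClass.coe_zero, sub_zero]
  have hDw : D w = 0 := by rw [hw, map_sub, hDz, hDv0, sub_self]
  have hπw : π w = 0 := by
    rw [hw, hv0, map_sub, map_sub, hπproj, hCmem₁]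
    abel
  have hwW : w ∈ LinearMap.ker (π : Hdiv →ₗ[ℝ] Hdiv) ⊓ LinearMap.ker (D : Hdiv →ₗ[ℝ] S) := by
    refine Submodule.mem_inf.mpr ⟨?_, ?_⟩
    · simpa [LinearMap.mem_ker] using hπw
    · simpa [LinearMap.mem_ker] using hDw
  have hv0mem : v0 ∈ Submodule.map
      ((ContinuousLinearMap.id ℝ Hdiv - 𝒞) : Hdiv →ₗ[ℝ] Hdiv) (LinearMap.range (π : Hdiv →ₗ[ℝ] Hdiv)) := by
    refine Submodule.mem_map.mpr ⟨π z, LinearMap.mem_range.mpr ⟨z, rfl⟩, ?_⟩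
    rw [hv0]
    simp
  -- a(e, v0) = 0
  have aev0 : ⟪Ainv (ι e), ι v0⟫ = 0 := by
    have hu := h1 v0
    have hums := hd1 v0 hv0mem
    rw [hDv0] at hu hums
    simp only [inner_zero_left, add_zero] at hu hums
    simp only [he, map_sub, inner_sub_left]
    rw [hu, hums, sub_self]
  -- a(e, w) = 0
  have aew : ⟪Ainv (ι e), ι w⟫ = 0 := by
    have hu : ⟪Ainv (ι u), ι w⟫ = 0 := by
      have := h1 w
      rw [hDw] at this
      simpa using this
    have hums : ⟪Ainv (ι uHms), ι w⟫ = 0 := by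
      obtain ⟨y, _, hy⟩ := huHms
      have hy' : uHms = y - 𝒞 y := by
        rw [← hy]; simp
      have hce := h𝒞eq y w hwW
      rw [hy']
      simp only [map_sub, inner_sub_left]
      rw [hce, sub_self]
    simp only [he, map_sub, inner_sub_left]
    rw [hu, hums, sub_self]
  have aez : ⟪Ainv (ι e), ι z⟫ = 0 := by
    have hz' : z = v0 + w := by rw [hw]; abel
    rw [hz', map_add, inner_add_right, aev0, aew, add_zero]
  -- Pythagoras (uses symmetry of the form)
  have hasym' : ∀ x y : L2v, ⟪Ainv x, y⟫ = ⟪Ainv y, x⟫ := by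
    intro x y
    rw [hAsym, real_inner_comm]
  obtain ⟨s, hs⟩ : ∃ t : ℝ, t = ⟪Ainv (ι ep), ι ep⟫ := ⟨_, rfl⟩
  have hs_nonneg : 0 ≤ s := hs ▸ hpos (ι ep)
  have quasi : ⟪Ainv (ι e), ι e⟫ ≤ s := by
    have hexp : s = ⟪Ainv (ι e), ι e⟫ - ⟪Ainv (ι e), ι z⟫ - ⟪Ainv (ι z), ι e⟫
        + ⟪Ainv (ι z), ι z⟫ := by
      simp only [hs, hepe, map_sub, inner_sub_left, inner_sub_right]
      ring
    have hsym := hasym' (ι z) (ι e)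
    have := hpos (ι z)
    rw [hexp, aez, hsym, aez]
    linarith
  -- perturbed-data identity : s = (f - Pf, (p - pPf))
  have hs1 : s = ⟪f - Pf, p - pPf⟫ := by
    have h1u := h1 u
    have h1uPf := h1 uPf
    have h1Pfu := h1Pf u
    have h1PfuPf := h1Pf uPf
    rw [hDu] at h1u h1Pfu
    rw [hDuPf] at h1uPf h1PfuPf
    simp only [inner_neg_left] at h1u h1uPf h1Pfu h1PfuPf
    have hexp : s = ⟪Ainv (ι u), ι u⟫ - ⟪Ainv (ι u), ι uPf⟫ - ⟪Ainv (ι uPf), ι u⟫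
        + ⟪Ainv (ι uPf), ι uPf⟫ := by
      simp only [hs, hep, map_sub, inner_sub_left, inner_sub_right]
      ring
    have hrhs : ⟪f - Pf, p - pPf⟫ = ⟪f, p⟫ - ⟪f, pPf⟫ - ⟪Pf, p⟫ + ⟪Pf, pPf⟫ := by
      simp only [inner_sub_left, inner_sub_right]
      ring
    rw [hexp, hrhs]
    linarith
  -- weak gradient characterization
  obtain ⟨pt, hjpt, hGpt⟩ := hGradChar (p - pPf) (Ainv (ι ep)) (by
    intro v
    have h1v := h1 v
    have h1Pfv := h1Pf v
    have hlhs : ⟪D v, p - pPf⟫ = ⟪D v, p⟫ - ⟪D v, pPf⟫ := inner_sub_right _ _ _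
    have hrhs : ⟪Ainv (ι ep), ι v⟫ = ⟪Ainv (ι u), ι v⟫ - ⟪Ainv (ι uPf), ι v⟫ := by
      simp only [hep, map_sub, inner_sub_left]
    rw [hlhs, hrhs]
    linarith)
  have hs2 : s = ⟪f - Pf, (p - pPf) - (QH.orthogonalProjectionOnto (p - pPf) : S)⟫ := by
    rw [inner_sub_right, ← hs1, hfPf _ (SetLike.coe_mem _), sub_zero]
  -- estimate
  obtain ⟨g, hg⟩ : ∃ x : L2v, x = Ainv (ι ep) := ⟨_, rfl⟩
  have hnormq : ‖(p - pPf) - (QH.orthogonalProjectionOnto (p - pPf) : S)‖ ≤ C_P * Hm * ‖g‖ := by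
    have := happrox pt
    rw [hjpt, hGpt, ← hg] at this
    exact this
  have hg_bound : ‖g‖ ^ 2 ≤ β * s := by
    rcases eq_or_ne g 0 with hg0 | hg0
    · rw [hg0, norm_zero]
      nlinarith
    · have hcs := psd_cauchy_schwarz Ainv hAsym hpos (ι ep) g
      have hgg : ⟪Ainv (ι ep), g⟫ = ‖g‖ ^ 2 := by
        rw [← hg, real_inner_self_eq_norm_sq]
      have hub := hupp g
      have hgpos : 0 < ‖g‖ := norm_pos_iff.mpr hg0
      rw [hgg, ← hs] at hcs
      have hg2 : 0 < ‖g‖ ^ 2 := by positivity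
      nlinarith [hcs, hub, hs_nonneg, hg2]
  have hgb : ‖g‖ ≤ Real.sqrt β * Real.sqrt s := by
    have h1' : ‖g‖ = Real.sqrt (‖g‖ ^ 2) := (Real.sqrt_sq (norm_nonneg g)).symm
    rw [h1', ← Real.sqrt_mul hβ.le]
    exact Real.sqrt_le_sqrt hg_bound
  have hsK : s ≤ (Real.sqrt β * C_P * Hm * ‖f - Pf‖) * Real.sqrt s := by
    calc s = ⟪f - Pf, (p - pPf) - (QH.orthogonalProjectionOnto (p - pPf) : S)⟫ := hs2
      _ ≤ ‖f - Pf‖ * ‖(p - pPf) - (QH.orthogonalProjectionOnto (p - pPf) : S)‖ :=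
          real_inner_le_norm _ _
      _ ≤ ‖f - Pf‖ * (C_P * Hm * ‖g‖) :=
          mul_le_mul_of_nonneg_left hnormq (norm_nonneg _)
      _ ≤ ‖f - Pf‖ * (C_P * Hm * (Real.sqrt β * Real.sqrt s)) := by
          apply mul_le_mul_of_nonneg_left _ (norm_nonneg _)
          exact mul_le_mul_of_nonneg_left hgb (by positivity)
      _ = (Real.sqrt β * C_P * Hm * ‖f - Pf‖) * Real.sqrt s := by ring
  have hsqrts : Real.sqrt s ≤ Real.sqrt β * C_P * Hm * ‖f - Pf‖ := by
    rcases eq_or_lt_of_le hs_nonneg with hs0 | hs0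
    · rw [← hs0, Real.sqrt_zero]
      positivity
    · have hsq : 0 < Real.sqrt s := Real.sqrt_pos.mpr hs0
      have hmul : Real.sqrt s * Real.sqrt s ≤
          (Real.sqrt β * C_P * Hm * ‖f - Pf‖) * Real.sqrt s := by
        rw [Real.mul_self_sqrt hs_nonneg]
        exact hsK
      exact le_of_mul_le_mul_right hmul hsq
  rw [← he, ← hPf]
  calc Real.sqrt ⟪Ainv (ι e), ι e⟫
      ≤ Real.sqrt s := Real.sqrt_le_sqrt quasi
    _ ≤ Real.sqrt β * C_P * Hm * ‖f - Pf‖ := hsqrts
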